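/- Let X be a discrete real random variable (d = 1, distribution P_X purely atomic with countable support 𝒳) such that E[X] = 0 and inf_{x∈𝒳} |x| > 0. Then for every integer M ≥ 2, the high-noise Ziv–Zakai functional is strictly below the variance: V̄(P_X, M) < Var(X). -/

import Mathlib

open MeasureTheory ProbabilityTheory ENNReal

noncomputable section

variable {d : ℕ} {𝒴 : Type*} [MeasurableSpace 𝒴]

/-- Law of `X - u` when `X ∼ P`, scalar case. -/
def shiftLaw1 (P : Measure ℝ) (u : ℝ) : Measure ℝ :=
  P.map (· - u)

/-- The mixture measure `μ_U = ∑_k P_{X-u_k}`, scalar case. -/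
def mixMeasure1 (P : Measure ℝ) {M : ℕ} (U : Fin M → ℝ) : Measure ℝ :=
  ∑ k : Fin M, shiftLaw1 P (U k)

/-- `H(P_X,t,M)` in the scalar case, where the constraint forces `u_k = kt`:
`∫ max_j (dP_{X−jt}/dμ_U) dμ_U`. -/
def Hfun1 (P : Measure ℝ) (M : ℕ) (t : ℝ) : ℝ≥0∞ :=
  ∫⁻ x, (⨆ j : Fin M,
      (shiftLaw1 P ((j : ℝ) * t)).rnDeriv (mixMeasure1 P fun k : Fin M => (k : ℝ) * t) x)
    ∂(mixMeasure1 P fun k : Fin M => (k : ℝ) * t)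

/-- High-noise Ziv–Zakai functional with valley-filling, scalar case. -/
def Vbar1 (P : Measure ℝ) (M : ℕ) : ℝ≥0∞ :=
  ∫⁻ t in Set.Ioi (0 : ℝ),
    ENNReal.ofReal (t / 2) *
      ⨆ (u : ℝ) (_ : t ≤ u), ((M : ℝ≥0∞) - Hfun1 P M u) / ((M : ℝ≥0∞) - 1)

section Aux

variable (P : Measure ℝ) [IsProbabilityMeasure P]

instance shiftLaw1_prob (u : ℝ) : IsProbabilityMeasure (shiftLaw1 P u) :=
  Measure.isProbabilityMeasure_map (measurable_sub_const u).aemeasurable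

lemma shiftLaw1_apply (u : ℝ) {s : Set ℝ} (hs : MeasurableSet s) :
    shiftLaw1 P u s = P ((· - u) ⁻¹' s) :=
  Measure.map_apply (measurable_sub_const u) hs

instance mixMeasure1_finite {M : ℕ} (U : Fin M → ℝ) : IsFiniteMeasure (mixMeasure1 P U) := by
  constructor
  rw [mixMeasure1, Measure.finset_sum_apply]
  simp only [measure_univ, Finset.sum_const, Finset.card_univ, Fintype.card_fin, nsmul_eq_mul,
    mul_one]
  exact ENNReal.natCast_lt_top M

lemma shift_le_mix {M : ℕ} (u : ℝ) (j : Fin M) :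
    shiftLaw1 P ((j : ℝ) * u) ≤ mixMeasure1 P (fun k : Fin M => (k : ℝ) * u) := by
  intro s
  rw [mixMeasure1, Measure.finset_sum_apply]
  exact Finset.single_le_sum (f := fun k : Fin M => shiftLaw1 P ((k : ℝ) * u) s)
    (fun _ _ => zero_le) (Finset.mem_univ j)

lemma shift_ac {M : ℕ} (u : ℝ) (j : Fin M) :
    shiftLaw1 P ((j : ℝ) * u) ≪ mixMeasure1 P (fun k : Fin M => (k : ℝ) * u) :=
  Measure.absolutelyContinuous_of_le (shift_le_mix P u j)

/-- Lower bound on `Hfun1` from any family of pairwise disjoint "decision regions". -/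
lemma Hfun1_ge_sum {M : ℕ} (u : ℝ) (A : Fin M → Set ℝ)
    (hA : ∀ j, MeasurableSet (A j)) (hdisj : Pairwise (Function.onFun Disjoint A)) :
    ∑ j : Fin M, shiftLaw1 P ((j : ℝ) * u) (A j) ≤ Hfun1 P M u := by
  calc ∑ j : Fin M, shiftLaw1 P ((j : ℝ) * u) (A j)
      = ∑ j : Fin M, ∫⁻ x in A j,
          (shiftLaw1 P ((j : ℝ) * u)).rnDeriv (mixMeasure1 P fun k : Fin M => (k : ℝ) * u) x
          ∂(mixMeasure1 P fun k : Fin M => (k : ℝ) * u) := by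
        refine Finset.sum_congr rfl fun j _ => ?_
        rw [Measure.setLIntegral_rnDeriv' (shift_ac P u j) (hA j)]
    _ ≤ ∑ j : Fin M, ∫⁻ x in A j,
          (⨆ i : Fin M,
            (shiftLaw1 P ((i : ℝ) * u)).rnDeriv (mixMeasure1 P fun k : Fin M => (k : ℝ) * u) x)
          ∂(mixMeasure1 P fun k : Fin M => (k : ℝ) * u) :=
        Finset.sum_le_sum fun j _ => lintegral_mono fun x => le_iSup
          (fun i : Fin M =>
            (shiftLaw1 P ((i : ℝ) * u)).rnDeriv (mixMeasure1 P fun k : Fin M => (k : ℝ) * u) x) j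
    _ = ∫⁻ x in ⋃ j, A j,
          (⨆ i : Fin M,
            (shiftLaw1 P ((i : ℝ) * u)).rnDeriv (mixMeasure1 P fun k : Fin M => (k : ℝ) * u) x)
          ∂(mixMeasure1 P fun k : Fin M => (k : ℝ) * u) := by
        rw [lintegral_iUnion hA hdisj, tsum_fintype]
    _ ≤ Hfun1 P M u := setLIntegral_le_lintegral _ _

/-- Lemma A: the `H`-functional always exceeds `1 + P{a}` for an atom `a`. -/
lemma Hfun1_ge_one_add_atom {M : ℕ} (hM : 2 ≤ M) {u : ℝ} (hu : 0 < u) (a : ℝ) :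
    1 + P {a} ≤ Hfun1 P M u := by
  have hMpos : 0 < M := by omega
  have hM1 : 1 < M := by omega
  set j0 : Fin M := ⟨0, hMpos⟩ with hj0
  set j1 : Fin M := ⟨1, hM1⟩ with hj1
  set μ := mixMeasure1 P (fun k : Fin M => (k : ℝ) * u) with hμdef
  set f : Fin M → ℝ → ℝ≥0∞ := fun j => (shiftLaw1 P ((j : ℝ) * u)).rnDeriv μ with hfdef
  have hfm : ∀ j : Fin M, Measurable (f j) := fun j => Measure.measurable_rnDeriv _ _
  have hint : ∀ j : Fin M, ∫⁻ x, f j x ∂μ = 1 := by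
    intro j
    rw [hfdef]
    rw [Measure.lintegral_rnDeriv (shift_ac P u j)]
    exact measure_univ
  -- the test set
  set F : Set ℝ := Set.range (fun k : ℕ => a + k * u) with hF
  set F' : Set ℝ := Set.range (fun k : ℕ => a + (k + 1) * u) with hF'
  have hFm : MeasurableSet F := (Set.countable_range _).measurableSet
  have hF'm : MeasurableSet F' := (Set.countable_range _).measurableSet
  have hsplit : F = {a} ∪ F' := by
    ext x
    constructor
    · rintro ⟨k, rfl⟩
      cases k with
      | zero => left; simp
      | succ n => right; exact ⟨n, by push_cast; ring⟩
    · rintro (rfl | ⟨k, rfl⟩)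
      · exact ⟨0, by simp⟩
      · exact ⟨k + 1, by push_cast; ring⟩
  have hdisjF : Disjoint ({a} : Set ℝ) F' := by
    rw [Set.disjoint_left]
    rintro x rfl ⟨k, hk⟩
    have hk2 : x + ((k : ℝ) + 1) * u = x := by simpa using hk
    have hk' : ((k : ℝ) + 1) * u > 0 := by positivity
    linarith
  have hPF : P F = P {a} + P F' := by
    rw [hsplit, measure_union hdisjF hF'm]
  have hPF1 : P F ≤ 1 := prob_le_one
  -- values of the shifted laws on F, Fᶜ
  have e2 : shiftLaw1 P ((j0 : ℝ) * u) Fᶜ = 1 - P F := by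
    rw [shiftLaw1_apply P _ hFm.compl]
    have hj0v : ((j0 : ℝ)) = 0 := by simp [hj0]
    have : ((· - (j0 : ℝ) * u) ⁻¹' Fᶜ) = Fᶜ := by
      rw [hj0v]; simp
    rw [this, prob_compl_eq_one_sub hFm]
  have e3 : shiftLaw1 P ((j1 : ℝ) * u) F = P F' := by
    rw [shiftLaw1_apply P _ hFm]
    congr 1
    have hj1v : ((j1 : ℝ)) = 1 := by simp [hj1]
    ext x
    simp only [Set.mem_preimage, hF, hF', Set.mem_range, hj1v, one_mul]
    constructor
    · rintro ⟨k, hk⟩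
      exact ⟨k, by push_cast; linarith⟩
    · rintro ⟨k, hk⟩
      exact ⟨k, by push_cast at hk ⊢; linarith⟩
  -- overlap bound
  have hmin : ∫⁻ x, (f j0 x ⊓ f j1 x) ∂μ ≤ 1 - P {a} := by
    have hsplit2 : ∫⁻ x, (f j0 x ⊓ f j1 x) ∂μ
        = ∫⁻ x in Fᶜ, (f j0 x ⊓ f j1 x) ∂μ + ∫⁻ x in Fᶜᶜ, (f j0 x ⊓ f j1 x) ∂μ :=
      (lintegral_add_compl _ hFm.compl).symm
    have h2 : ∫⁻ x in Fᶜ, (f j0 x ⊓ f j1 x) ∂μ ≤ 1 - P F := by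
      refine le_trans (le_trans (lintegral_mono fun x => inf_le_left)
        (Measure.setLIntegral_rnDeriv_le _)) ?_
      rw [e2]
    have h3 : ∫⁻ x in Fᶜᶜ, (f j0 x ⊓ f j1 x) ∂μ ≤ P F' := by
      rw [compl_compl]
      refine le_trans (le_trans (lintegral_mono fun x => inf_le_right)
        (Measure.setLIntegral_rnDeriv_le _)) ?_
      rw [e3]
    have hsum : (1 - P F) + P F' = 1 - P {a} := by
      refine ENNReal.eq_sub_of_add_eq (measure_ne_top P {a}) ?_
      rw [add_assoc, add_comm (P F') (P {a}), ← hPF, tsub_add_cancel_of_le hPF1]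
    calc ∫⁻ x, (f j0 x ⊓ f j1 x) ∂μ
        = ∫⁻ x in Fᶜ, (f j0 x ⊓ f j1 x) ∂μ + ∫⁻ x in Fᶜᶜ, (f j0 x ⊓ f j1 x) ∂μ := hsplit2
      _ ≤ (1 - P F) + P F' := add_le_add h2 h3
      _ = 1 - P {a} := hsum
  -- min + max
  have hkey : ∫⁻ x, (f j0 x ⊔ f j1 x) ∂μ + ∫⁻ x, (f j0 x ⊓ f j1 x) ∂μ = 2 := by
    rw [← lintegral_add_left ((hfm j0).max (hfm j1))]
    have hpt : ∀ x, (f j0 x ⊔ f j1 x) + (f j0 x ⊓ f j1 x) = f j0 x + f j1 x := fun x => by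
      rw [add_comm]
      exact min_add_max (f j0 x) (f j1 x)
    rw [lintegral_congr hpt, lintegral_add_left (hfm j0), hint j0, hint j1, one_add_one_eq_two]
  have hsup : 1 + P {a} ≤ ∫⁻ x, (f j0 x ⊔ f j1 x) ∂μ := by
    have h2' : (2 : ℝ≥0∞) ≤ ∫⁻ x, (f j0 x ⊔ f j1 x) ∂μ + (1 - P {a}) := by
      rw [← hkey]
      exact add_le_add_right hmin _
    have h3' : (2 : ℝ≥0∞) - (1 - P {a}) ≤ ∫⁻ x, (f j0 x ⊔ f j1 x) ∂μ :=
      tsub_le_iff_right.mpr h2'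
    have hPa1 : P {a} ≤ 1 := prob_le_one
    have h4' : 1 + P {a} = 2 - (1 - P {a}) := by
      refine ENNReal.eq_sub_of_add_eq (ENNReal.sub_ne_top one_ne_top) ?_
      rw [add_assoc, add_tsub_cancel_of_le hPa1, one_add_one_eq_two]
    exact le_trans (le_of_eq h4') h3' 
  refine le_trans hsup (lintegral_mono fun x => ?_)
  exact sup_le (le_iSup (fun i : Fin M => f i x) j0) (le_iSup (fun i : Fin M => f i x) j1)

/-- Lemma B: `M − H(u) ≤ (M−1)·P(|x| ≥ u/2)`, via the nearest-grid-point `M`-ary test. -/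
lemma sub_Hfun1_le {M : ℕ} (hM : 2 ≤ M) {u : ℝ} (hu : 0 < u) :
    (M : ℝ≥0∞) - Hfun1 P M u ≤ ((M : ℝ≥0∞) - 1) * P {x : ℝ | u / 2 ≤ |x|} := by
  classical
  -- decision regions
  set A : Fin M → Set ℝ := fun j =>
    {y : ℝ | (∀ k : Fin M, (k : ℕ) < (j : ℕ) → |y + (j : ℝ) * u| < |y + (k : ℝ) * u|) ∧
      (∀ k : Fin M, |y + (j : ℝ) * u| ≤ |y + (k : ℝ) * u|)} with hAdef
  have habs_m : ∀ b : ℝ, Measurable fun y : ℝ => |y + b| :=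
    fun b => (measurable_id.add_const b).abs
  have hAm : ∀ j, MeasurableSet (A j) := by
    intro j
    have h1 : MeasurableSet {y : ℝ |
        ∀ k : Fin M, (k : ℕ) < (j : ℕ) → |y + (j : ℝ) * u| < |y + (k : ℝ) * u|} := by
      rw [Set.setOf_forall]
      refine MeasurableSet.iInter fun k => ?_
      by_cases hk : (k : ℕ) < (j : ℕ)
      · simp only [hk, true_implies]
        exact measurableSet_lt (habs_m _) (habs_m _)
      · simp only [hk, false_implies, Set.setOf_true]
        exact MeasurableSet.univ
    have h2 : MeasurableSet {y : ℝ | ∀ k : Fin M, |y + (j : ℝ) * u| ≤ |y + (k : ℝ) * u|} := by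
      rw [Set.setOf_forall]
      exact MeasurableSet.iInter fun k => measurableSet_le (habs_m _) (habs_m _)
    exact h1.inter h2
  have hdisj : Pairwise (Function.onFun Disjoint A) := by
    have key : ∀ i j : Fin M, (i : ℕ) < (j : ℕ) → Disjoint (A i) (A j) := by
      intro i j hij
      rw [Set.disjoint_left]
      rintro y ⟨_, hi2⟩ ⟨hj1, _⟩
      exact absurd (hi2 j) (not_le.mpr (hj1 i hij))
    intro i j hij
    have hne : (i : ℕ) ≠ (j : ℕ) := fun h => hij (Fin.ext h)
    rcases lt_or_gt_of_ne hne with h | h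
    · exact key i j h
    · exact (key j i h).symm
  have h1 : ∑ j : Fin M, shiftLaw1 P ((j : ℝ) * u) (A j) ≤ Hfun1 P M u :=
    Hfun1_ge_sum P u A hAm hdisj
  -- step: M − H ≤ ∑_j P_j(A_jᶜ)
  have h2 : (M : ℝ≥0∞) - Hfun1 P M u ≤ ∑ j : Fin M, shiftLaw1 P ((j : ℝ) * u) (A j)ᶜ := by
    refine le_trans (tsub_le_tsub_left h1 _) ?_
    rw [tsub_le_iff_right]
    have hj : ∀ j : Fin M, shiftLaw1 P ((j : ℝ) * u) (A j)ᶜ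
        + shiftLaw1 P ((j : ℝ) * u) (A j) = 1 := by
      intro j
      rw [add_comm]
      rw [measure_add_measure_compl (hAm j)]
      exact measure_univ
    rw [← Finset.sum_add_distrib, Finset.sum_congr rfl (fun j _ => hj j)]
    simp
  -- preimages
  set B : Fin M → Set ℝ := fun j => (fun x : ℝ => x - (j : ℝ) * u) ⁻¹' (A j)ᶜ with hBdef
  have hBm : ∀ j, MeasurableSet (B j) := fun j => (hAm j).compl.preimage (measurable_sub_const _)
  have h3 : ∀ j : Fin M, shiftLaw1 P ((j : ℝ) * u) (A j)ᶜ = P (B j) := fun j =>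
    shiftLaw1_apply P _ (hAm j).compl
  have hnotB : ∀ (j : Fin M) (x : ℝ), x - (j : ℝ) * u ∈ A j → x ∉ B j := by
    intro j x hx hxB
    rw [hBdef] at hxB
    simp only [Set.mem_preimage, Set.mem_compl_iff] at hxB
    exact hxB hx
  -- small |x| : all tests succeed
  have hsmall : ∀ x : ℝ, |x| < u / 2 → ∀ j : Fin M, x - (j : ℝ) * u ∈ A j := by
    intro x hx j
    have key : ∀ k : Fin M, k ≠ j → |x| < |x - (j : ℝ) * u + (k : ℝ) * u| := by
      intro k hk
      have hne : ((k : ℕ) : ℤ) ≠ ((j : ℕ) : ℤ) := by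
        intro h
        exact hk (Fin.ext (by exact_mod_cast h))
      have hm0 : (1 : ℤ) ≤ |((k : ℕ) : ℤ) - ((j : ℕ) : ℤ)| :=
        Int.one_le_abs (sub_ne_zero.mpr hne)
      have hm : (1 : ℝ) ≤ |(k : ℝ) - (j : ℝ)| := by
        have h5 : (1 : ℝ) ≤ |((((k : ℕ) : ℤ) : ℝ)) - ((((j : ℕ) : ℤ) : ℝ))| := by
          rw [← Int.cast_sub, ← Int.cast_abs]
          exact_mod_cast hm0
        push_cast at h5
        exact h5
      have habs1 : |((k : ℝ) - (j : ℝ)) * u| = |(k : ℝ) - (j : ℝ)| * u := by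
        rw [abs_mul, abs_of_pos hu]
      have h2' : |((k : ℝ) - (j : ℝ)) * u| ≤ |x - (j : ℝ) * u + (k : ℝ) * u| + |x| := by
        have habs2 := abs_add_le (x - (j : ℝ) * u + (k : ℝ) * u) (-x)
        have heq : x - (j : ℝ) * u + (k : ℝ) * u + -x = ((k : ℝ) - (j : ℝ)) * u := by ring
        rw [heq, abs_neg] at habs2
        exact habs2
      have hum : u ≤ |((k : ℝ) - (j : ℝ)) * u| := by
        rw [habs1]
        nlinarith
      linarith
    have heq0 : x - (j : ℝ) * u + (j : ℝ) * u = x := by ring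
    constructor
    · intro k hkj
      have hne : k ≠ j := by
        intro h
        rw [h] at hkj
        exact lt_irrefl _ hkj
      rw [heq0]
      exact key k hne
    · intro k
      by_cases hkj : k = j
      · rw [hkj]
      · rw [heq0]
        exact le_of_lt (key k hkj)
  -- large |x| : at least one test succeeds
  have hbig : ∀ x : ℝ, u / 2 ≤ |x| → ∃ j : Fin M, x - (j : ℝ) * u ∈ A j := by
    intro x _
    rcases le_or_gt 0 x with hx | hx
    · refine ⟨⟨0, by omega⟩, ?_, ?_⟩
      · intro k hk
        exact absurd hk (by simp)
      · intro k
        have hj0 : (((⟨0, by omega⟩ : Fin M) : ℕ) : ℝ) = 0 := by norm_num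
        rw [hj0]
        have hku : 0 ≤ (k : ℝ) * u := mul_nonneg (by positivity) hu.le
        rw [abs_of_nonneg (by linarith : (0:ℝ) ≤ x - 0 * u + 0 * u),
          abs_of_nonneg (by linarith : (0:ℝ) ≤ x - 0 * u + (k : ℝ) * u)]
        linarith
    · have hMpos : 0 < M := by omega
      refine ⟨⟨M - 1, by omega⟩, ?_, ?_⟩
      all_goals
        have hjv : (((⟨M - 1, by omega⟩ : Fin M) : ℕ) : ℝ) = (M : ℝ) - 1 := by
          simp only [Fin.val_mk]
          rw [Nat.cast_sub (by omega : 1 ≤ M), Nat.cast_one]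
      · intro k hk
        have hk' : (k : ℝ) + 1 ≤ (M : ℝ) - 1 := by
          simp only [Fin.val_mk] at hk
          have hk2 : (k : ℕ) + 1 ≤ M - 1 := hk
          have := (Nat.cast_le (α := ℝ)).mpr hk2
          push_cast [Nat.cast_sub (by omega : 1 ≤ M)] at this
          linarith
        rw [hjv]
        have e1 : x - ((M : ℝ) - 1) * u + ((M : ℝ) - 1) * u = x := by ring
        rw [e1, abs_of_neg hx,
          abs_of_neg (by nlinarith : x - ((M : ℝ) - 1) * u + (k : ℝ) * u < 0)]
        nlinarith
      · intro k
        have hk' : (k : ℝ) ≤ (M : ℝ) - 1 := by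
          have hk2 : (k : ℕ) ≤ M - 1 := by omega
          have := (Nat.cast_le (α := ℝ)).mpr hk2
          push_cast [Nat.cast_sub (by omega : 1 ≤ M)] at this
          linarith
        rw [hjv]
        have e1 : x - ((M : ℝ) - 1) * u + ((M : ℝ) - 1) * u = x := by ring
        rw [e1, abs_of_neg hx,
          abs_of_nonpos (by nlinarith : x - ((M : ℝ) - 1) * u + (k : ℝ) * u ≤ 0)]
        nlinarith
  -- measurable target set
  have hS : MeasurableSet {x : ℝ | u / 2 ≤ |x|} := measurableSet_le measurable_const measurable_abs
  -- the counting bound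
  have hcount : ∀ x : ℝ, (∑ j : Fin M, (B j).indicator (1 : ℝ → ℝ≥0∞) x)
      ≤ ((M : ℝ≥0∞) - 1) * {x : ℝ | u / 2 ≤ |x|}.indicator (1 : ℝ → ℝ≥0∞) x := by
    intro x
    rcases lt_or_ge (|x|) (u / 2) with hx | hx
    · have hz : ∀ j : Fin M, (B j).indicator (1 : ℝ → ℝ≥0∞) x = 0 := fun j =>
        Set.indicator_of_notMem (hnotB j x (hsmall x hx j)) _
      rw [Finset.sum_eq_zero fun j _ => hz j]
      exact zero_le
    · obtain ⟨j₀, hj₀⟩ := hbig x hx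
      have hmem : x ∈ {x : ℝ | u / 2 ≤ |x|} := hx
      rw [Set.indicator_of_mem hmem]
      calc ∑ j : Fin M, (B j).indicator (1 : ℝ → ℝ≥0∞) x
          = ∑ j ∈ Finset.univ.erase j₀, (B j).indicator (1 : ℝ → ℝ≥0∞) x
            + (B j₀).indicator (1 : ℝ → ℝ≥0∞) x :=
            (Finset.sum_erase_add _ _ (Finset.mem_univ j₀)).symm
        _ = ∑ j ∈ Finset.univ.erase j₀, (B j).indicator (1 : ℝ → ℝ≥0∞) x := by
            rw [Set.indicator_of_notMem (hnotB j₀ x hj₀), add_zero]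
        _ ≤ ∑ _j ∈ Finset.univ.erase j₀, (1 : ℝ≥0∞) := by
            refine Finset.sum_le_sum fun j _ => ?_
            by_cases h : x ∈ B j
            · rw [Set.indicator_of_mem h]; exact le_rfl
            · rw [Set.indicator_of_notMem h]; exact zero_le_one
        _ = ((M : ℝ≥0∞) - 1) * 1 := by
            rw [Finset.sum_const, Finset.card_erase_of_mem (Finset.mem_univ j₀),
              Finset.card_univ, Fintype.card_fin, nsmul_eq_mul, mul_one, mul_one,
              ENNReal.natCast_sub, Nat.cast_one]
  -- put everything together
  have h4 : ∑ j : Fin M, P (B j) ≤ ((M : ℝ≥0∞) - 1) * P {x : ℝ | u / 2 ≤ |x|} := by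
    calc ∑ j : Fin M, P (B j)
        = ∑ j : Fin M, ∫⁻ x, (B j).indicator (1 : ℝ → ℝ≥0∞) x ∂P :=
          Finset.sum_congr rfl fun j _ => (lintegral_indicator_one (hBm j)).symm
      _ = ∫⁻ x, ∑ j : Fin M, (B j).indicator (1 : ℝ → ℝ≥0∞) x ∂P :=
          (lintegral_finset_sum _ fun j _ => measurable_one.indicator (hBm j)).symm
      _ ≤ ∫⁻ x, ((M : ℝ≥0∞) - 1) * {x : ℝ | u / 2 ≤ |x|}.indicator (1 : ℝ → ℝ≥0∞) x ∂P :=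
          lintegral_mono hcount
      _ = ((M : ℝ≥0∞) - 1) * P {x : ℝ | u / 2 ≤ |x|} := by
          rw [lintegral_const_mul _ (measurable_one.indicator hS), lintegral_indicator_one hS]
  refine le_trans h2 (le_trans (le_of_eq (Finset.sum_congr rfl fun j _ => h3 j)) h4)


end Aux

/-- **The Ziv–Zakai bound is never tight in the high-noise regime for discrete inputs
(Theorem 4).** If `X` is a discrete real random variable with `E[X] = 0` whose support is
bounded away from zero, then `V̄(P_X, M) < Var(X)` for every `M ≥ 2`. -/
theorem discrete_high_noise_not_tight
    (P : Measure ℝ) [IsProbabilityMeasure P]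
    (hcount : Set.Countable {x : ℝ | P {x} ≠ 0})
    (hdisc : P {x : ℝ | P {x} ≠ 0}ᶜ = 0)
    (hL2 : MemLp (fun x => x) 2 P)
    (hmean : ∫ x, x ∂P = 0)
    (hinf : ∃ c > (0 : ℝ), ∀ x : ℝ, P {x} ≠ 0 → c ≤ |x|)
    (M : ℕ) (hM : 2 ≤ M) :
    Vbar1 P M < evariance (fun x => x) P := by
  classical
  obtain ⟨c₀, hc₀pos, hc₀⟩ := hinf
  -- there is an atom
  obtain ⟨a, ha⟩ : ∃ x : ℝ, P {x} ≠ 0 := by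
    by_contra h
    push_neg at h
    have hempty : {x : ℝ | P {x} ≠ 0} = ∅ :=
      Set.eq_empty_iff_forall_notMem.mpr fun x hx => hx (h x)
    rw [hempty, Set.compl_empty, measure_univ] at hdisc
    exact one_ne_zero hdisc
  have hπ1 : P {a} ≤ 1 := prob_le_one
  have hπ0 : P {a} ≠ 0 := ha
  have hc2 : (2 : ℝ≥0∞) ≤ (M : ℝ≥0∞) := by exact_mod_cast hM
  have hc1 : (1 : ℝ≥0∞) ≤ (M : ℝ≥0∞) - 1 := by
    have e : ((M - 1 : ℕ) : ℝ≥0∞) = (M : ℝ≥0∞) - 1 := by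
      rw [ENNReal.natCast_sub, Nat.cast_one]
    rw [← e]
    exact_mod_cast (by omega : 1 ≤ M - 1)
  have hcne0 : ((M : ℝ≥0∞) - 1) ≠ 0 := (zero_lt_one.trans_le hc1).ne'
  have hcnetop : ((M : ℝ≥0∞) - 1) ≠ ⊤ := ENNReal.sub_ne_top (ENNReal.natCast_ne_top M)
  have hπc : P {a} ≤ (M : ℝ≥0∞) - 1 := hπ1.trans hc1
  set ρ : ℝ≥0∞ := ((M : ℝ≥0∞) - 1 - P {a}) / ((M : ℝ≥0∞) - 1) with hρdef
  set κ : ℝ≥0∞ := P {a} / ((M : ℝ≥0∞) - 1) with hκdef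
  have hρκ : ρ + κ = 1 := by
    rw [hρdef, hκdef, ENNReal.div_add_div_same, tsub_add_cancel_of_le hπc,
      ENNReal.div_self hcne0 hcnetop]
  have hκ0 : κ ≠ 0 := by
    rw [hκdef, ne_eq, ENNReal.div_eq_zero_iff]
    push_neg
    exact ⟨hπ0, hcnetop⟩
  -- per-u bounds on the integrand
  have hAu : ∀ u : ℝ, 0 < u →
      ((M : ℝ≥0∞) - Hfun1 P M u) / ((M : ℝ≥0∞) - 1) ≤ ρ := by
    intro u hu
    have h1 : 1 + P {a} ≤ Hfun1 P M u := Hfun1_ge_one_add_atom P hM hu a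
    have h2 : (M : ℝ≥0∞) - Hfun1 P M u ≤ (M : ℝ≥0∞) - 1 - P {a} := by
      refine le_trans (tsub_le_tsub_left h1 _) (le_of_eq ?_)
      rw [tsub_add_eq_tsub_tsub]
    exact ENNReal.div_le_div_right h2 _
  have hBu : ∀ u : ℝ, 0 < u →
      ((M : ℝ≥0∞) - Hfun1 P M u) / ((M : ℝ≥0∞) - 1) ≤ P {x : ℝ | u / 2 ≤ |x|} := by
    intro u hu
    rw [ENNReal.div_le_iff_le_mul (Or.inl hcne0) (Or.inl hcnetop), mul_comm]
    exact sub_Hfun1_le P hM hu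
  -- bounding functions on (0, ∞)
  set φ : ℝ → ℝ≥0∞ := fun t => P {x : ℝ | t / 2 ≤ |x|} * ENNReal.ofReal (t / 2) with hφdef
  set ψ : ℝ → ℝ≥0∞ :=
    fun t => ENNReal.ofReal (t / 2) * min ρ (P {x : ℝ | t / 2 ≤ |x|}) with hψdef
  set χ : ℝ → ℝ≥0∞ :=
    (Set.Ioc (0 : ℝ) (2 * c₀)).indicator (fun t => ENNReal.ofReal (t / 2) * κ) with hχdef
  -- evariance via layer cake
  have hev : evariance (fun x => x) P = ∫⁻ t in Set.Ioi (0 : ℝ), φ t := by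
    rw [evariance_eq_lintegral_ofReal]
    have hgnn : ∀ᵐ t ∂(volume.restrict (Set.Ioi (0 : ℝ))), 0 ≤ t / 2 := by
      filter_upwards [self_mem_ae_restrict measurableSet_Ioi] with t ht
      exact (half_pos ht).le
    have hlc := lintegral_comp_eq_lintegral_meas_le_mul (f := fun x : ℝ => 2 * |x|)
      (g := fun t : ℝ => t / 2) P
      (Filter.Eventually.of_forall fun x => by positivity)
      ((measurable_abs.const_mul 2).aemeasurable)
      (fun t _ => (continuous_id.div_const 2).intervalIntegrable 0 t)
      hgnn
    have hx2 : ∀ x : ℝ, ENNReal.ofReal ((x - ∫ y, y ∂P) ^ 2)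
        = ENNReal.ofReal (∫ s in (0 : ℝ)..(2 * |x|), s / 2) := by
      intro x
      rw [hmean, sub_zero]
      congr 1
      rw [intervalIntegral.integral_div, integral_id, ← sq_abs x]
      ring
    calc ∫⁻ x, ENNReal.ofReal ((x - ∫ y, y ∂P) ^ 2) ∂P
        = ∫⁻ x, ENNReal.ofReal (∫ s in (0 : ℝ)..(2 * |x|), s / 2) ∂P :=
          lintegral_congr hx2
      _ = ∫⁻ t in Set.Ioi (0 : ℝ), P {x : ℝ | t ≤ 2 * |x|} * ENNReal.ofReal (t / 2) := hlc
      _ = ∫⁻ t in Set.Ioi (0 : ℝ), φ t := by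
          refine lintegral_congr fun t => ?_
          rw [hφdef]
          have hseteq : {x : ℝ | t ≤ 2 * |x|} = {x : ℝ | t / 2 ≤ |x|} := by
            ext y
            simp only [Set.mem_setOf_eq]
            constructor <;> intro h <;> linarith
          rw [hseteq]
  -- Vbar1 is bounded by ∫ ψ
  have hVb : Vbar1 P M ≤ ∫⁻ t in Set.Ioi (0 : ℝ), ψ t := by
    unfold Vbar1
    refine lintegral_mono_ae ?_
    filter_upwards [self_mem_ae_restrict measurableSet_Ioi] with t ht
    rw [hψdef]
    refine mul_le_mul_right ?_ _
    refine iSup_le fun u => iSup_le fun htu => ?_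
    have hu : (0 : ℝ) < u := lt_of_lt_of_le ht htu
    refine le_min (hAu u hu) (le_trans (hBu u hu) (measure_mono fun x hx => ?_))
    simp only [Set.mem_setOf_eq] at hx ⊢
    linarith
  -- pointwise bound ψ + χ ≤ φ on (0, ∞)
  have hpt : ∀ t ∈ Set.Ioi (0 : ℝ), ψ t + χ t ≤ φ t := by
    intro t ht
    have ht0 : (0 : ℝ) < t := ht
    rcases le_or_gt t (2 * c₀) with h2 | h2
    · have hτ1 : P {x : ℝ | t / 2 ≤ |x|} = 1 := by
        have hnull : P {x : ℝ | |x| < t / 2} = 0 := by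
          refine measure_mono_null (fun x hx => ?_) hdisc
          simp only [Set.mem_setOf_eq] at hx
          intro hxD
          exact absurd (hc₀ x hxD) (not_le.mpr (lt_of_lt_of_le hx (by linarith)))
        have hset : {x : ℝ | t / 2 ≤ |x|} = {x : ℝ | |x| < t / 2}ᶜ := by
          ext x
          simp [not_lt]
        rw [hset, prob_compl_eq_one_sub (measurableSet_lt measurable_abs measurable_const),
          hnull, tsub_zero]
      simp only [hψdef, hφdef, hχdef]
      rw [Set.indicator_of_mem (Set.mem_Ioc.mpr ⟨ht0, h2⟩), hτ1, one_mul, ← mul_add]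
      refine le_trans (mul_le_mul_right ?_ _) (le_of_eq (mul_one _))
      calc min ρ 1 + κ ≤ ρ + κ := add_le_add_left (min_le_left _ _) κ
        _ = 1 := hρκ
    · simp only [hψdef, hφdef, hχdef]
      rw [Set.indicator_of_notMem (fun hmem => absurd hmem.2 (not_le.mpr h2)), add_zero,
        mul_comm (P {x : ℝ | t / 2 ≤ |x|}) _]
      exact mul_le_mul_right (min_le_right _ _) _
  -- χ is measurable
  have hχm : Measurable χ := by
    rw [hχdef]
    exact ((ENNReal.measurable_ofReal.comp (measurable_id.div_const 2)).mul_const κ).indicator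
      measurableSet_Ioc
  -- combination
  have hfin : (∫⁻ t in Set.Ioi (0 : ℝ), ψ t) + (∫⁻ t in Set.Ioi (0 : ℝ), χ t)
      ≤ evariance (fun x => x) P := by
    rw [hev, ← lintegral_add_right _ hχm]
    refine lintegral_mono_ae ?_
    filter_upwards [self_mem_ae_restrict measurableSet_Ioi] with t ht using hpt t ht
  -- the gap is nonzero
  have hgap : (∫⁻ t in Set.Ioi (0 : ℝ), χ t) ≠ 0 := by
    intro h0
    have hsub : Set.Ioc c₀ (2 * c₀) ⊆ Set.Ioi (0 : ℝ) := fun t ht => lt_trans hc₀pos ht.1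
    have hlb : ENNReal.ofReal (c₀ / 2) * κ * volume (Set.Ioc c₀ (2 * c₀))
        ≤ ∫⁻ t in Set.Ioi (0 : ℝ), χ t := by
      calc ENNReal.ofReal (c₀ / 2) * κ * volume (Set.Ioc c₀ (2 * c₀))
          = ∫⁻ _t in Set.Ioc c₀ (2 * c₀), ENNReal.ofReal (c₀ / 2) * κ ∂volume :=
            (setLIntegral_const _ _).symm
        _ ≤ ∫⁻ t in Set.Ioc c₀ (2 * c₀), χ t ∂volume := by
            refine lintegral_mono_ae ?_
            filter_upwards [self_mem_ae_restrict measurableSet_Ioc] with t ht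
            simp only [hχdef]
            rw [Set.indicator_of_mem (Set.mem_Ioc.mpr ⟨lt_trans hc₀pos ht.1, ht.2⟩)]
            exact mul_le_mul_left (ENNReal.ofReal_le_ofReal (by linarith [ht.1])) κ
        _ ≤ ∫⁻ t in Set.Ioi (0 : ℝ), χ t :=
            lintegral_mono' (Measure.restrict_mono hsub le_rfl) le_rfl
    rw [h0, le_zero_iff] at hlb
    have h1 : ENNReal.ofReal (c₀ / 2) ≠ 0 := by
      rw [ne_eq, ENNReal.ofReal_eq_zero, not_le]
      linarith
    have h2v : volume (Set.Ioc c₀ (2 * c₀)) ≠ 0 := by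
      rw [Real.volume_Ioc, ne_eq, ENNReal.ofReal_eq_zero, not_le]
      linarith
    exact (mul_ne_zero (mul_ne_zero h1 hκ0) h2v) hlb
  have hψne : (∫⁻ t in Set.Ioi (0 : ℝ), ψ t) ≠ ⊤ :=
    ne_top_of_le_ne_top hL2.evariance_lt_top.ne (le_trans (le_add_right le_rfl) hfin)
  calc Vbar1 P M ≤ ∫⁻ t in Set.Ioi (0 : ℝ), ψ t := hVb
    _ < (∫⁻ t in Set.Ioi (0 : ℝ), ψ t) + (∫⁻ t in Set.Ioi (0 : ℝ), χ t) :=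
        ENNReal.lt_add_right hψne hgap
    _ ≤ evariance (fun x => x) P := hfin
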